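/- arXiv:1812.11669 — 4 statements merged into one kernel-verified Lean document; each statement's English description precedes it below -/
import Mathlib

section
/- For arbitrary real constants c > 0 and d ∈ ℝ, the integral ∫₀^∞ e^{−cξ} N(d√ξ) dξ equals (1/(2c))·(1 + d/√(d² + 2c)), where N is the standard normal cumulative distribution function. -/
open Real Set MeasureTheory

/-- The standard normal cumulative distribution function. -/
noncomputable def stdNormalCDF (x : ℝ) : ℝ :=
  (Real.sqrt (2 * Real.pi))⁻¹ * ∫ t in Set.Iic x, Real.exp (-t ^ 2 / 2)

open Filter Topology

lemma gauss_eq : (fun t : ℝ => Real.exp (-t ^ 2 / 2)) = fun t => Real.exp (-(1/2) * t ^ 2) := by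
  funext t; ring_nf

lemma gauss_integrable : Integrable (fun t : ℝ => Real.exp (-t ^ 2 / 2)) := by
  rw [gauss_eq]; exact integrable_exp_neg_mul_sq (by norm_num)

lemma gauss_total : ∫ t : ℝ, Real.exp (-t ^ 2 / 2) = Real.sqrt (2 * Real.pi) := by
  rw [gauss_eq, integral_gaussian]
  norm_num [mul_comm]

lemma sqrt_two_pi_pos : 0 < Real.sqrt (2 * Real.pi) :=
  Real.sqrt_pos.2 (by positivity)

lemma gauss_Iic_zero : ∫ t in Iic (0:ℝ), Real.exp (-t ^ 2 / 2) = Real.sqrt (2 * Real.pi) / 2 := by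
  have h : ∫ t in Iic (0:ℝ), Real.exp (-t ^ 2 / 2)
      = ∫ t in Ioi (0:ℝ), Real.exp (-t ^ 2 / 2) := by
    have := integral_comp_neg_Iic (0:ℝ) (fun t => Real.exp (-t ^ 2 / 2))
    simpa using this
  rw [h, gauss_eq, integral_gaussian_Ioi]
  norm_num [mul_comm]

lemma stdNormalCDF_hasDerivAt (x : ℝ) :
    HasDerivAt stdNormalCDF ((Real.sqrt (2 * Real.pi))⁻¹ * Real.exp (-x ^ 2 / 2)) x := by
  have key : ∀ y : ℝ, ∫ t in Iic y, Real.exp (-t ^ 2 / 2)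
      = (∫ t in Iic (0:ℝ), Real.exp (-t ^ 2 / 2)) + ∫ t in (0:ℝ)..y, Real.exp (-t ^ 2 / 2) := by
    intro y
    rw [← intervalIntegral.integral_Iic_sub_Iic gauss_integrable.integrableOn
      gauss_integrable.integrableOn]
    ring
  have hcont : Continuous fun t : ℝ => Real.exp (-t ^ 2 / 2) := by continuity
  have hftc : HasDerivAt (fun y : ℝ => ∫ t in (0:ℝ)..y, Real.exp (-t ^ 2 / 2))
      (Real.exp (-x ^ 2 / 2)) x :=
    intervalIntegral.integral_hasDerivAt_right (hcont.intervalIntegrable 0 x)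
      hcont.stronglyMeasurable.stronglyMeasurableAtFilter hcont.continuousAt
  have : stdNormalCDF = fun y =>
      (Real.sqrt (2 * Real.pi))⁻¹ * ((∫ t in Iic (0:ℝ), Real.exp (-t ^ 2 / 2))
        + ∫ t in (0:ℝ)..y, Real.exp (-t ^ 2 / 2)) := by
    funext y; rw [stdNormalCDF, key]
  rw [this]
  exact (hftc.const_add _).const_mul _

lemma stdNormalCDF_continuous : Continuous stdNormalCDF :=
  continuous_iff_continuousAt.2 fun x => (stdNormalCDF_hasDerivAt x).continuousAt

lemma stdNormalCDF_zero : stdNormalCDF 0 = 1 / 2 := by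
  rw [stdNormalCDF, gauss_Iic_zero]
  field_simp

lemma stdNormalCDF_nonneg (x : ℝ) : 0 ≤ stdNormalCDF x := by
  apply mul_nonneg (by positivity)
  exact setIntegral_nonneg measurableSet_Iic fun t _ => (Real.exp_pos _).le

lemma stdNormalCDF_le_one (x : ℝ) : stdNormalCDF x ≤ 1 := by
  rw [stdNormalCDF]
  have h : ∫ t in Iic x, Real.exp (-t ^ 2 / 2) ≤ Real.sqrt (2 * Real.pi) := by
    rw [← gauss_total]
    exact setIntegral_le_integral gauss_integrable
      (ae_of_all _ fun t => (Real.exp_pos _).le)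
  calc (Real.sqrt (2 * Real.pi))⁻¹ * ∫ t in Iic x, Real.exp (-t ^ 2 / 2)
      ≤ (Real.sqrt (2 * Real.pi))⁻¹ * Real.sqrt (2 * Real.pi) := by
        gcongr
    _ = 1 := inv_mul_cancel₀ sqrt_two_pi_pos.ne'

lemma stdNormalCDF_tendsto : Tendsto stdNormalCDF atTop (𝓝 1) := by
  have h := (MeasureTheory.aecover_Iic
      (tendsto_id : Tendsto (id : ℝ → ℝ) atTop atTop)).integral_tendsto_of_countably_generated
      gauss_integrable
  have h2 := h.const_mul (Real.sqrt (2 * Real.pi))⁻¹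
  rw [gauss_total, inv_mul_cancel₀ sqrt_two_pi_pos.ne'] at h2
  exact h2

lemma tendsto_sqrt_atTop : Tendsto Real.sqrt atTop atTop :=
  (tendsto_rpow_atTop (by norm_num : (0:ℝ) < 1/2)).congr
    (fun x => (Real.sqrt_eq_rpow x).symm)

/-- For `c > 0` and `d ∈ ℝ`,
`∫₀^∞ e^{−cξ} N(d√ξ) dξ = (1/(2c))·(1 + d/√(d² + 2c))`. -/
theorem integral_exp_mul_stdNormalCDF (c d : ℝ) (hc : 0 < c) :
    ∫ ξ in Set.Ioi (0 : ℝ), Real.exp (-c * ξ) * stdNormalCDF (d * Real.sqrt ξ)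
      = (1 / (2 * c)) * (1 + d / Real.sqrt (d ^ 2 + 2 * c)) := by

  have ha : (0:ℝ) < d ^ 2 + 2 * c := by positivity
  set s : ℝ := Real.sqrt (d ^ 2 + 2 * c) with hs_def
  have hs : 0 < s := Real.sqrt_pos.2 ha
  have hs2 : s ^ 2 = d ^ 2 + 2 * c := Real.sq_sqrt ha.le
  set H : ℝ → ℝ := fun ξ => -(1/c) * Real.exp (-c * ξ) * stdNormalCDF (d * Real.sqrt ξ)
      + (1/c) * (d/s) * stdNormalCDF (s * Real.sqrt ξ) with hH_def
  have hderiv : ∀ ξ ∈ Ioi (0:ℝ), HasDerivAt H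
      (Real.exp (-c * ξ) * stdNormalCDF (d * Real.sqrt ξ)) ξ := by
    intro ξ hξ
    rw [mem_Ioi] at hξ
    have hsqξ : (0:ℝ) < Real.sqrt ξ := Real.sqrt_pos.2 hξ
    have hsq : HasDerivAt Real.sqrt (1 / (2 * Real.sqrt ξ)) ξ := Real.hasDerivAt_sqrt hξ.ne'
    have hN1 : HasDerivAt (fun ξ => stdNormalCDF (d * Real.sqrt ξ))
        ((Real.sqrt (2 * Real.pi))⁻¹ * Real.exp (-(d * Real.sqrt ξ) ^ 2 / 2)
          * (d * (1 / (2 * Real.sqrt ξ)))) ξ :=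
      (stdNormalCDF_hasDerivAt _).comp ξ (hsq.const_mul d)
    have hN2 : HasDerivAt (fun ξ => stdNormalCDF (s * Real.sqrt ξ))
        ((Real.sqrt (2 * Real.pi))⁻¹ * Real.exp (-(s * Real.sqrt ξ) ^ 2 / 2)
          * (s * (1 / (2 * Real.sqrt ξ)))) ξ :=
      (stdNormalCDF_hasDerivAt _).comp ξ (hsq.const_mul s)
    have hexp : HasDerivAt (fun ξ : ℝ => Real.exp (-c * ξ)) (Real.exp (-c * ξ) * (-c)) ξ := by
      have h0 : HasDerivAt (fun ξ : ℝ => -c * ξ) (-c) ξ := by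
        simpa using (hasDerivAt_id ξ).const_mul (-c)
      exact h0.exp
    have := ((hexp.mul hN1).const_mul (-(1/c))).add (hN2.const_mul ((1/c) * (d/s)))
    have e1 : Real.exp (-(s * Real.sqrt ξ) ^ 2 / 2)
        = Real.exp (-c * ξ) * Real.exp (-(d * Real.sqrt ξ) ^ 2 / 2) := by
      rw [← Real.exp_add]
      congr 1
      rw [mul_pow, mul_pow, Real.sq_sqrt hξ.le, hs2]
      ring
    convert this using 1
    · rfl
    · rfl
    · rw [hH_def]; funext x; simp only [Pi.add_apply, Pi.mul_apply]; ring
    · rw [e1]; field_simp; ring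
  have hcont : ContinuousWithinAt H (Ici 0) 0 := by
    have : Continuous H := by
      apply Continuous.add
      · exact (continuous_const.mul ((continuous_const.mul continuous_id).rexp)).mul
          (stdNormalCDF_continuous.comp (continuous_const.mul Real.continuous_sqrt))
      · exact continuous_const.mul
          (stdNormalCDF_continuous.comp (continuous_const.mul Real.continuous_sqrt))
    exact this.continuousWithinAt
  have f'int : IntegrableOn (fun ξ => Real.exp (-c * ξ) * stdNormalCDF (d * Real.sqrt ξ))
      (Ioi (0:ℝ)) := by
    apply Integrable.mono (exp_neg_integrableOn_Ioi 0 hc)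
    · exact (((continuous_const.mul continuous_id).rexp).mul
        (stdNormalCDF_continuous.comp (continuous_const.mul Real.continuous_sqrt))).aestronglyMeasurable.restrict
    · refine ae_of_all _ fun ξ => ?_
      rw [Real.norm_eq_abs, Real.norm_eq_abs,
        abs_of_nonneg (mul_nonneg (Real.exp_pos _).le (stdNormalCDF_nonneg _)),
        abs_of_nonneg (Real.exp_pos _).le]
      exact mul_le_of_le_one_right (Real.exp_pos _).le (stdNormalCDF_le_one _)
  have htop : Tendsto H atTop (𝓝 ((1/c) * (d/s))) := by
    have t1 : Tendsto (fun ξ : ℝ => Real.exp (-c * ξ)) atTop (𝓝 0) := by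
      have hmul : Tendsto (fun ξ : ℝ => c * ξ) atTop atTop :=
        Tendsto.const_mul_atTop hc tendsto_id
      have h2 := Real.tendsto_exp_neg_atTop_nhds_zero.comp hmul
      simpa [Function.comp_def, neg_mul] using h2
    have t2 : Tendsto (fun ξ : ℝ => -(1/c) * Real.exp (-c * ξ)
        * stdNormalCDF (d * Real.sqrt ξ)) atTop (𝓝 0) := by
      apply squeeze_zero_norm (a := fun ξ : ℝ => (1/c) * Real.exp (-c * ξ))
        (fun ξ => ?_) (by simpa using t1.const_mul (1/c))
      ·
        rw [norm_mul, norm_mul, Real.norm_eq_abs, Real.norm_eq_abs, Real.norm_eq_abs,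
          abs_of_nonneg (Real.exp_pos _).le, abs_neg, abs_of_nonneg (by positivity : (0:ℝ) ≤ 1/c)]
        calc 1/c * Real.exp (-c * ξ) * |stdNormalCDF (d * Real.sqrt ξ)|
            ≤ 1/c * Real.exp (-c * ξ) * 1 := by
              gcongr
              rw [abs_of_nonneg (stdNormalCDF_nonneg _)]
              exact stdNormalCDF_le_one _
          _ = 1/c * Real.exp (-c * ξ) := by ring
    have t3 : Tendsto (fun ξ : ℝ => (1/c) * (d/s) * stdNormalCDF (s * Real.sqrt ξ)) atTop
        (𝓝 ((1/c) * (d/s) * 1)) := by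
      apply Tendsto.const_mul
      apply stdNormalCDF_tendsto.comp
      exact Tendsto.const_mul_atTop hs _root_.tendsto_sqrt_atTop
    have := t2.add t3
    rw [hH_def]
    simpa using this
  have key := MeasureTheory.integral_Ioi_of_hasDerivAt_of_tendsto hcont hderiv f'int htop
  rw [key, hH_def]
  simp only [Real.sqrt_zero, mul_zero, stdNormalCDF_zero, Real.exp_zero]
  field_simp
  ring
end

section
/- For any nonzero real numbers a and b, ∫₀^∞ exp(−a²x² − b²/x²) dx = (√π / (2|a|)) · e^{−2|a||b|}. -/
open Real Set MeasureTheory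

/-- For nonzero reals `a`, `b`:
`∫₀^∞ exp(−a²x² − b²/x²) dx = (√π/(2|a|))·e^{−2|a||b|}`. -/
theorem integral_exp_neg_sq_add_inv_sq (a b : ℝ) (ha : a ≠ 0) (hb : b ≠ 0) :
    ∫ x in Set.Ioi (0 : ℝ), Real.exp (-a ^ 2 * x ^ 2 - b ^ 2 / x ^ 2)
      = (Real.sqrt Real.pi / (2 * |a|)) * Real.exp (-2 * |a| * |b|) := by
  set c := |a| with hcdef
  set d := |b| with hddef
  have hc0 : 0 < c := abs_pos.mpr ha
  have hd0 : 0 < d := abs_pos.mpr hb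
  set f : ℝ → ℝ := fun x => c * x - d * x⁻¹ with hfdef
  set g : ℝ → ℝ := fun x => Real.exp (-(f x) ^ 2) with hgdef
  set φ : ℝ → ℝ := fun x => d / c * x⁻¹ with hφdef
  -- continuity of g on Ioi 0
  have hgcont : ContinuousOn g (Ioi 0) := by
    apply Real.continuous_exp.comp_continuousOn
    apply ContinuousOn.neg
    apply ContinuousOn.pow
    exact (continuousOn_const.mul continuousOn_id).sub
      (continuousOn_const.mul (continuousOn_id.inv₀ fun x hx => ne_of_gt hx))
  -- integrability of g on Ioi 0
  have hgint : IntegrableOn g (Ioi 0) := by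
    have hmaj : IntegrableOn
        (fun x => Real.exp (2 * c * d) * Real.exp (-(c ^ 2) * x ^ 2)) (Ioi 0) :=
      ((integrable_exp_neg_mul_sq (by positivity : (0:ℝ) < c ^ 2)).const_mul _).integrableOn
    apply hmaj.mono' (hgcont.aestronglyMeasurable measurableSet_Ioi)
    filter_upwards [ae_restrict_mem measurableSet_Ioi] with x hx
    have hx0 : x ≠ 0 := ne_of_gt hx
    rw [Real.norm_eq_abs, abs_of_nonneg (Real.exp_pos _).le, ← Real.exp_add]
    show Real.exp (-(c * x - d * x⁻¹) ^ 2) ≤ _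
    apply Real.exp_le_exp.mpr
    have hxx : x * x⁻¹ = 1 := mul_inv_cancel₀ hx0
    nlinarith [sq_nonneg (d * x⁻¹), mul_pos hc0 hd0]
  -- derivative of φ
  have hφ' : ∀ x ∈ Ioi (0:ℝ), HasDerivWithinAt φ (d / c * -(x ^ 2)⁻¹) (Ioi 0) x := by
    intro x hx
    exact ((hasDerivAt_inv (ne_of_gt hx)).const_mul (d / c)).hasDerivWithinAt
  -- φ maps Ioi 0 onto Ioi 0
  have hφmem : ∀ x : ℝ, 0 < x → φ x ∈ Ioi (0:ℝ) := by
    intro x hx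
    simp only [hφdef, mem_Ioi]
    positivity
  have himφ : φ '' Ioi 0 = Ioi 0 := by
    apply Subset.antisymm
    · rintro _ ⟨x, hx, rfl⟩
      exact hφmem x hx
    · intro y hy
      refine ⟨d / c * y⁻¹, hφmem y hy, ?_⟩
      simp only [hφdef]
      field_simp
  -- φ is injective on Ioi 0
  have hφinj : InjOn φ (Ioi 0) := by
    intro x hx y hy hxy
    simp only [hφdef] at hxy
    have hdc : d / c ≠ 0 := by positivity
    exact inv_injective (mul_left_cancel₀ hdc hxy)
  -- g ∘ φ = g on Ioi 0
  have hgφ : ∀ x : ℝ, 0 < x → g (φ x) = g x := by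
    intro x hx
    have hx0 : x ≠ 0 := ne_of_gt hx
    simp only [hgdef, hφdef, hfdef]
    congr 1
    have : c * (d / c * x⁻¹) - d * (d / c * x⁻¹)⁻¹ = -(c * x - d * x⁻¹) := by
      field_simp
      ring
    rw [this, neg_sq]
  -- substitution x ↦ φ x : J = K
  have keyφ : ∫ x in Ioi (0:ℝ), g x = ∫ x in Ioi (0:ℝ), (d / c * (x ^ 2)⁻¹) * g x := by
    conv_lhs => rw [← himφ]
    rw [integral_image_eq_integral_abs_deriv_smul measurableSet_Ioi hφ' hφinj g]
    apply setIntegral_congr_fun measurableSet_Ioi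
    intro x hx
    show |d / c * -(x ^ 2)⁻¹| • g (φ x) = d / c * (x ^ 2)⁻¹ * g x
    rw [hgφ x hx]
    rw [mul_neg, abs_neg, abs_of_nonneg (by positivity : (0:ℝ) ≤ d / c * (x ^ 2)⁻¹),
      smul_eq_mul]
  -- integrability of K integrand
  have hKint : IntegrableOn (fun x => (d / c * (x ^ 2)⁻¹) * g x) (Ioi 0) := by
    have h1 : IntegrableOn g (φ '' Ioi 0) := by rwa [himφ]
    have h2 := (integrableOn_image_iff_integrableOn_abs_deriv_smul
      measurableSet_Ioi hφ' hφinj g).mp h1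
    apply h2.congr_fun ?_ measurableSet_Ioi
    intro x hx
    show |d / c * -(x ^ 2)⁻¹| • g (φ x) = d / c * (x ^ 2)⁻¹ * g x
    rw [hgφ x hx]
    rw [mul_neg, abs_neg, abs_of_nonneg (by positivity : (0:ℝ) ≤ d / c * (x ^ 2)⁻¹),
      smul_eq_mul]
  -- derivative of f
  have hf' : ∀ x ∈ Ioi (0:ℝ), HasDerivWithinAt f (c + d * (x ^ 2)⁻¹) (Ioi 0) x := by
    intro x hx
    have h := ((hasDerivAt_id x).const_mul c).sub
      ((hasDerivAt_inv (ne_of_gt hx)).const_mul d)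
    have heq : c * 1 - d * -(x ^ 2)⁻¹ = c + d * (x ^ 2)⁻¹ := by ring
    rw [heq] at h
    exact h.hasDerivWithinAt
  -- f is injective on Ioi 0
  have hfinj : InjOn f (Ioi 0) := by
    apply StrictMonoOn.injOn
    intro x hx y hy hxy
    simp only [hfdef]
    have hix : (0:ℝ) < x⁻¹ := inv_pos.mpr hx
    have hiy : (0:ℝ) < y⁻¹ := inv_pos.mpr hy
    have h1 : y⁻¹ < x⁻¹ := by
      rw [inv_lt_inv₀ (mem_Ioi.mp hy) (mem_Ioi.mp hx)]
      exact hxy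
    nlinarith
  -- f maps Ioi 0 onto ℝ
  have himf : f '' Ioi 0 = univ := by
    apply eq_univ_of_forall
    intro u
    set s := Real.sqrt (u ^ 2 + 4 * c * d) with hs
    have hs2 : s ^ 2 = u ^ 2 + 4 * c * d := Real.sq_sqrt (by positivity)
    have hs0 : 0 ≤ s := Real.sqrt_nonneg _
    have hsu : -u < s := by nlinarith [mul_pos hc0 hd0]
    set x := (u + s) / (2 * c) with hxdef
    have hx0 : 0 < x := div_pos (by linarith) (by linarith)
    have hxne : x ≠ 0 := ne_of_gt hx0
    have hquad : c * x ^ 2 = u * x + d := by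
      rw [hxdef]
      field_simp
      nlinarith [hs2]
    refine ⟨x, mem_Ioi.mpr hx0, ?_⟩
    simp only [hfdef]
    field_simp
    linear_combination hquad
  -- main substitution
  have key : Real.sqrt Real.pi
      = ∫ x in Ioi (0:ℝ), |c + d * (x ^ 2)⁻¹| • Real.exp (-(f x) ^ 2) := by
    rw [← integral_image_eq_integral_abs_deriv_smul measurableSet_Ioi hf' hfinj
      (fun u => Real.exp (-u ^ 2)), himf, Measure.restrict_univ]
    have : ∀ u : ℝ, Real.exp (-u ^ 2) = Real.exp (-1 * u ^ 2) := by
      intro u; ring_nf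
    simp_rw [this]
    rw [integral_gaussian 1, div_one]
  -- rewrite RHS of key as sum
  have key2 : Real.sqrt Real.pi
      = (∫ x in Ioi (0:ℝ), c * g x) + ∫ x in Ioi (0:ℝ), c * ((d / c * (x ^ 2)⁻¹) * g x) := by
    rw [key, ← integral_add (hgint.const_mul c) (hKint.const_mul c)]
    apply setIntegral_congr_fun measurableSet_Ioi
    intro x hx
    have hx0 : (0:ℝ) < x := hx
    have habs : |c + d * (x ^ 2)⁻¹| = c + d * (x ^ 2)⁻¹ := abs_of_pos (by positivity)
    show |c + d * (x ^ 2)⁻¹| • Real.exp (-(f x) ^ 2)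
      = c * g x + c * (d / c * (x ^ 2)⁻¹ * g x)
    rw [habs, smul_eq_mul]
    have hgx : Real.exp (-(f x) ^ 2) = g x := rfl
    rw [hgx]
    field_simp
  set J := ∫ x in Ioi (0:ℝ), g x with hJ
  have key3 : Real.sqrt Real.pi = 2 * c * J := by
    rw [key2, integral_const_mul, integral_const_mul, ← keyφ, ← hJ]
    ring
  have hJval : J = Real.sqrt Real.pi / (2 * c) := by
    field_simp [key3]
    linarith [key3]
  -- relate the original integral to J
  have hfinal : ∫ x in Set.Ioi (0:ℝ), Real.exp (-a ^ 2 * x ^ 2 - b ^ 2 / x ^ 2)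
      = Real.exp (-(2 * c * d)) * J := by
    rw [hJ, ← integral_const_mul]
    apply setIntegral_congr_fun measurableSet_Ioi
    intro x hx
    have hx0 : x ≠ 0 := ne_of_gt hx
    show Real.exp (-a ^ 2 * x ^ 2 - b ^ 2 / x ^ 2) = Real.exp (-(2 * c * d)) * g x
    rw [show g x = Real.exp (-(f x)^2) from rfl, ← Real.exp_add]
    congr 1
    have ha2 : a ^ 2 = c ^ 2 := (sq_abs a).symm
    have hb2 : b ^ 2 = d ^ 2 := (sq_abs b).symm
    rw [ha2, hb2, hfdef]
    field_simp
    ring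
  rw [hfinal, hJval]
  have : -2 * c * d = -(2 * c * d) := by ring
  rw [this]
  ring
end

section
/- For any nonzero real numbers a and b, ∫₀^∞ (1/x²) · exp(−a²x² − b²/x²) dx = (√π / (2|b|)) · e^{−2|a||b|}. -/
open Real Set MeasureTheory

section Aux
variable {A B : ℝ}

lemma phi_image (hA : 0 < A) (hB : 0 < B) :
    (fun x : ℝ => B / (A * x)) '' Ioi 0 = Ioi 0 := by
  ext y
  constructor
  · rintro ⟨x, hx, rfl⟩
    exact div_pos hB (mul_pos hA hx)
  · intro hy
    refine ⟨B / (A * y), div_pos hB (mul_pos hA hy), ?_⟩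
    field_simp

lemma phi_injOn (hA : 0 < A) (hB : 0 < B) :
    InjOn (fun x : ℝ => B / (A * x)) (Ioi 0) := by
  intro x hx y hy h
  simp only [] at h
  have hx' : x ≠ 0 := ne_of_gt hx
  have hy' : y ≠ 0 := ne_of_gt hy
  have h' : B / (A * x) = B / (A * y) := h
  rw [div_eq_div_iff (mul_ne_zero hA.ne' hx') (mul_ne_zero hA.ne' hy')] at h'
  exact (mul_left_cancel₀ hA.ne' (mul_left_cancel₀ hB.ne' h')).symm

lemma g_strictMono (hA : 0 < A) (hB : 0 < B) :
    StrictMonoOn (fun x : ℝ => A * x - B / x) (Ioi 0) := by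
  intro x hx y hy hxy
  simp only []
  have h1 : B / y ≤ B / x := div_le_div_of_nonneg_left hB.le hx hxy.le
  have h2 : A * x < A * y := by nlinarith [mem_Ioi.mp hx]
  linarith

lemma g_image (hA : 0 < A) (hB : 0 < B) :
    (fun x : ℝ => A * x - B / x) '' Ioi 0 = univ := by
  ext c
  simp only [mem_univ, iff_true, mem_image]
  set s := Real.sqrt (c ^ 2 + 4 * A * B) with hs_def
  have hs2 : s ^ 2 = c ^ 2 + 4 * A * B := Real.sq_sqrt (by nlinarith)
  have hs_pos : |c| < s := by
    have : Real.sqrt (c ^ 2) < s := by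
      apply Real.sqrt_lt_sqrt (sq_nonneg c)
      nlinarith
    rwa [Real.sqrt_sq_eq_abs] at this
  have hcs : 0 < c + s := by
    have := neg_abs_le c
    linarith
  have hx0 : 0 < (c + s) / (2 * A) := div_pos hcs (by linarith)
  refine ⟨(c + s) / (2 * A), hx0, ?_⟩
  have hxne : (c + s) / (2 * A) ≠ 0 := ne_of_gt hx0
  field_simp
  nlinarith [hs2]
end Aux

/-- For nonzero reals `a`, `b`:
`∫₀^∞ (1/x²)·exp(−a²x² − b²/x²) dx = (√π/(2|b|))·e^{−2|a||b|}`. -/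
theorem integral_inv_sq_mul_exp_neg_sq_add_inv_sq (a b : ℝ) (ha : a ≠ 0) (hb : b ≠ 0) :
    ∫ x in Set.Ioi (0 : ℝ), (1 / x ^ 2) * Real.exp (-a ^ 2 * x ^ 2 - b ^ 2 / x ^ 2)
      = (Real.sqrt Real.pi / (2 * |b|)) * Real.exp (-2 * |a| * |b|) := by
  set A := |a| with hA_def
  set B := |b| with hB_def
  have hA : 0 < A := abs_pos.2 ha
  have hB : 0 < B := abs_pos.2 hb
  have ha2 : a ^ 2 = A ^ 2 := (sq_abs a).symm
  have hb2 : b ^ 2 = B ^ 2 := (sq_abs b).symm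
  set F : ℝ → ℝ := fun x => Real.exp (-a ^ 2 * x ^ 2 - b ^ 2 / x ^ 2) with hF_def
  have hFmeas : Measurable F := by measurability
  have hFpos : ∀ x, 0 < F x := fun x => Real.exp_pos _
  -- integrability of F on Ioi 0
  have hI_int : IntegrableOn F (Ioi 0) := by
    refine Integrable.mono'
      ((integrable_exp_neg_mul_sq (show (0:ℝ) < A ^ 2 by positivity)).integrableOn)
      hFmeas.aestronglyMeasurable ?_
    refine (ae_restrict_iff' measurableSet_Ioi).2 (ae_of_all _ fun x hx => ?_)
    rw [Real.norm_eq_abs, abs_of_nonneg (Real.exp_nonneg _)]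
    apply Real.exp_le_exp.2
    have h0 : 0 ≤ b ^ 2 / x ^ 2 := by positivity
    rw [ha2]; linarith
  -- derivative of φ
  have hphi_deriv : ∀ x ∈ Ioi (0:ℝ), HasDerivWithinAt (fun x : ℝ => B / (A * x))
      (B / A * -(x ^ 2)⁻¹) (Ioi 0) x := by
    intro x hx
    have hx' : x ≠ 0 := ne_of_gt (mem_Ioi.mp hx)
    have h1 : HasDerivAt (fun y : ℝ => B / A * y⁻¹) (B / A * -(x ^ 2)⁻¹) x :=
      (hasDerivAt_inv hx').const_mul (B / A)
    have h2 : (fun x : ℝ => B / (A * x)) = fun y : ℝ => B / A * y⁻¹ := by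
      funext y
      rw [div_mul_eq_div_div, div_eq_mul_inv]
    rw [h2]
    exact h1.hasDerivWithinAt
  -- F ∘ φ = F on Ioi 0
  have hFphi : ∀ x : ℝ, 0 < x → F (B / (A * x)) = F x := by
    intro x hx
    have hx' : x ≠ 0 := ne_of_gt hx
    have hAx : A * x ≠ 0 := by positivity
    simp only [hF_def]
    congr 1
    rw [ha2, hb2]
    field_simp
    ring
  -- change of variables φ: I = (B/A) * J
  have hCoV1 : ∫ x in Ioi (0:ℝ), F x
      = ∫ x in Ioi (0:ℝ), (B / A) * ((1 / x ^ 2) * F x) := by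
    conv_lhs => rw [← phi_image hA hB]
    rw [integral_image_eq_integral_abs_deriv_smul measurableSet_Ioi hphi_deriv
      (phi_injOn hA hB) F]
    refine setIntegral_congr_fun measurableSet_Ioi fun x hx => ?_
    have hx0 : (0:ℝ) < x := mem_Ioi.mp hx
    have habs : |B / A * -(x ^ 2)⁻¹| = B / A * (x ^ 2)⁻¹ := by
      rw [abs_mul, abs_neg, abs_of_nonneg (by positivity : (0:ℝ) ≤ B / A),
        abs_of_nonneg (by positivity : (0:ℝ) ≤ (x ^ 2)⁻¹)]
    rw [smul_eq_mul, habs, hFphi x hx0]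
    rw [one_div]
    ring
  -- J is integrable
  have hJ_int : IntegrableOn (fun x => (1 / x ^ 2) * F x) (Ioi 0) := by
    have h := (integrableOn_image_iff_integrableOn_abs_deriv_smul measurableSet_Ioi hphi_deriv
      (phi_injOn hA hB) F).mp (by rw [phi_image hA hB]; exact hI_int)
    have h2 : IntegrableOn (fun x => (B / A) * ((1 / x ^ 2) * F x)) (Ioi 0) := by
      refine h.congr_fun (fun x hx => ?_) measurableSet_Ioi
      have hx0 : (0:ℝ) < x := mem_Ioi.mp hx
      have habs : |B / A * -(x ^ 2)⁻¹| = B / A * (x ^ 2)⁻¹ := by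
        rw [abs_mul, abs_neg, abs_of_nonneg (by positivity : (0:ℝ) ≤ B / A),
          abs_of_nonneg (by positivity : (0:ℝ) ≤ (x ^ 2)⁻¹)]
      beta_reduce
      rw [smul_eq_mul, habs, hFphi x hx0, one_div]
      ring
    have h3 : IntegrableOn (fun x => (A / B) * ((B / A) * ((1 / x ^ 2) * F x))) (Ioi 0) :=
      h2.const_mul (A / B)
    refine h3.congr_fun (fun x hx => ?_) measurableSet_Ioi
    have hone : A / B * (B / A) = 1 := by field_simp
    beta_reduce
    rw [← mul_assoc, hone, one_mul]
  -- derivative of g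
  have hg_deriv : ∀ x ∈ Ioi (0:ℝ), HasDerivWithinAt (fun x : ℝ => A * x - B / x)
      (A + B * (x ^ 2)⁻¹) (Ioi 0) x := by
    intro x hx
    have hx' : x ≠ 0 := ne_of_gt (mem_Ioi.mp hx)
    have h1 : HasDerivAt (fun y : ℝ => A * y - B * y⁻¹) (A * 1 - B * -(x ^ 2)⁻¹) x :=
      ((hasDerivAt_id x).const_mul A).sub ((hasDerivAt_inv hx').const_mul B)
    have h2 : (fun x : ℝ => A * x - B / x) = fun y : ℝ => A * y - B * y⁻¹ := by
      funext y; rw [div_eq_mul_inv]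
    rw [h2]
    have e : A + B * (x ^ 2)⁻¹ = A * 1 - B * -(x ^ 2)⁻¹ := by ring
    rw [e]
    exact h1.hasDerivWithinAt
  -- exponent identity: exp(-(g x)^2) = F x * exp(2AB)
  have hgF : ∀ x : ℝ, 0 < x → Real.exp (-(A * x - B / x) ^ 2) = F x * Real.exp (2 * A * B) := by
    intro x hx
    have hx' : x ≠ 0 := ne_of_gt hx
    rw [hF_def, ← Real.exp_add]
    congr 1
    rw [ha2, hb2]
    field_simp
    ring
  -- change of variables g: √π = exp(2AB) * ∫ (A + B/x²) F
  have hCoV2 : Real.sqrt Real.pi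
      = ∫ x in Ioi (0:ℝ), (A + B * (x ^ 2)⁻¹) * (F x * Real.exp (2 * A * B)) := by
    have hgauss : ∫ u : ℝ, Real.exp (-u ^ 2) = Real.sqrt Real.pi := by
      have := integral_gaussian 1
      simpa using this
    rw [← hgauss]
    rw [← setIntegral_univ (f := fun u : ℝ => Real.exp (-u ^ 2)), ← g_image hA hB]
    rw [integral_image_eq_integral_abs_deriv_smul measurableSet_Ioi hg_deriv
      ((g_strictMono hA hB).injOn) (fun u => Real.exp (-u ^ 2))]
    refine setIntegral_congr_fun measurableSet_Ioi fun x hx => ?_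
    have hx0 : (0:ℝ) < x := mem_Ioi.mp hx
    rw [smul_eq_mul, abs_of_nonneg (by positivity : (0:ℝ) ≤ A + B * (x ^ 2)⁻¹), hgF x hx0]
  -- split the integral
  have h_int1 : IntegrableOn (fun x => A * F x) (Ioi 0) := hI_int.const_mul A
  have h_int2 : IntegrableOn (fun x => B * ((1 / x ^ 2) * F x)) (Ioi 0) := hJ_int.const_mul B
  set I := ∫ x in Ioi (0:ℝ), F x with hI_def
  set J := ∫ x in Ioi (0:ℝ), (1 / x ^ 2) * F x with hJ_def
  have hsplit : ∫ x in Ioi (0:ℝ), (A + B * (x ^ 2)⁻¹) * F x = A * I + B * J := by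
    have : ∀ x ∈ Ioi (0:ℝ), (A + B * (x ^ 2)⁻¹) * F x
        = A * F x + B * ((1 / x ^ 2) * F x) := by
      intro x hx
      rw [one_div]; ring
    rw [setIntegral_congr_fun measurableSet_Ioi this, integral_add h_int1 h_int2,
      integral_const_mul, integral_const_mul]
  have hkey : Real.sqrt Real.pi = Real.exp (2 * A * B) * (A * I + B * J) := by
    rw [hCoV2, ← hsplit]
    rw [← integral_const_mul]
    refine setIntegral_congr_fun measurableSet_Ioi fun x hx => ?_
    ring
  have hIJ : I = (B / A) * J := by
    rw [hCoV1, integral_const_mul, ← hJ_def]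
  -- finish
  have hAI : A * I = B * J := by
    rw [hIJ]; field_simp
  have h2BJ : Real.sqrt Real.pi = Real.exp (2 * A * B) * (2 * B * J) := by
    rw [hkey, hAI]; ring_nf
  have hexp : Real.exp (2 * A * B) ≠ 0 := Real.exp_ne_zero _
  have hJval : J = Real.sqrt Real.pi / (2 * B) * Real.exp (-(2 * A * B)) := by
    rw [Real.exp_neg]
    field_simp at h2BJ ⊢
    linarith [h2BJ]
  calc J = Real.sqrt Real.pi / (2 * B) * Real.exp (-(2 * A * B)) := hJval
    _ = Real.sqrt Real.pi / (2 * B) * Real.exp (-2 * A * B) := by ring_nf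
end

section
/- Under the standing assumptions, the constant z_∞ := (ρ̂(α₋γ + γ − 1)/(Kα₋γ))^{γ/(γ−1)} satisfies 0 < z_∞ < 1, where α₋ is the negative root of f(α) = (γ²σ²/2)α² + (r̂ − ρ̂ + γ²σ²/2)α − ρ̂ = 0. -/
open Real

/-- Under the standing assumptions, `z_∞ = (ρ̂(α₋γ + γ − 1)/(Kα₋γ))^{γ/(γ−1)}`
satisfies `0 < z_∞ < 1`, where `α₋ < −1` is the negative root of
`(γ²σ²/2)α² + (r̂ − ρ̂ + γ²σ²/2)α − ρ̂ = 0`. -/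
theorem z_infty_lt_one
    (γ σ μ r ρ rhat ρhat K αm : ℝ)
    (hr : 0 < r) (hrρ : r ≤ ρ) (hγ : 0 < γ) (hγ1 : γ ≠ 1) (hσ : 0 < σ)
    (hμ : σ ^ 2 / 2 < μ)
    (hrhat : rhat = r - μ) (hrhat_pos : 0 < rhat)
    (hρhat : ρhat = ρ - (1 - γ) * μ + (1 / 2) * γ * (1 - γ) * σ ^ 2) (hρhat_pos : 0 < ρhat)
    (hK : K = r + (ρ - r) / γ) (hK_pos : 0 < K)
    (hαm : αm < -1)
    (hroot : γ ^ 2 * σ ^ 2 / 2 * αm ^ 2 + (rhat - ρhat + γ ^ 2 * σ ^ 2 / 2) * αm - ρhat = 0) :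
    0 < (ρhat * (αm * γ + γ - 1) / (K * αm * γ)) ^ (γ / (γ - 1)) ∧
      (ρhat * (αm * γ + γ - 1) / (K * αm * γ)) ^ (γ / (γ - 1)) < 1 := by
  have hαneg : αm < 0 := by linarith
  have hng : αm * γ + γ - 1 < 0 := by nlinarith
  have hden : K * αm * γ < 0 := by
    have := mul_pos hK_pos hγ
    nlinarith
  have hnum : ρhat * (αm * γ + γ - 1) < 0 := mul_neg_of_pos_of_neg hρhat_pos hng
  have hb : 0 < ρhat * (αm * γ + γ - 1) / (K * αm * γ) :=
    div_pos_of_neg_of_neg hnum hden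
  -- key identity from the quadratic root
  have hKey : ρhat - αm * (r - ρ - γ * μ + γ ^ 2 * σ ^ 2 / 2)
      = γ * σ ^ 2 / 2 * αm * (γ * αm + γ - 1) := by
    subst hrhat hρhat
    linear_combination (-1 : ℝ) * hroot
  have hposE : 0 < ρhat - αm * (r - ρ - γ * μ + γ ^ 2 * σ ^ 2 / 2) := by
    rw [hKey]
    have h1 : γ * αm + γ - 1 < 0 := by nlinarith
    have h2 : γ * σ ^ 2 / 2 * αm < 0 := mul_neg_of_pos_of_neg (by positivity) hαneg
    exact mul_pos_of_neg_of_neg h2 h1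
  have hKA : γ * ρhat - γ * K = (1 - γ) * (r - ρ - γ * μ + γ ^ 2 * σ ^ 2 / 2) := by
    subst hρhat
    rw [hK]
    field_simp
    ring
  have hD : K * αm * γ - ρhat * (αm * γ + γ - 1)
      = (1 - γ) * (ρhat - αm * (r - ρ - γ * μ + γ ^ 2 * σ ^ 2 / 2)) := by
    linear_combination (-αm) * hKA
  rcases lt_or_gt_of_ne hγ1 with h1 | h1
  · -- γ < 1: base > 1, exponent < 0
    have hblt : 1 < ρhat * (αm * γ + γ - 1) / (K * αm * γ) := by
      rw [one_lt_div_of_neg hden]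
      linarith [hD, mul_pos (by linarith : (0:ℝ) < 1 - γ) hposE]
    have hexp : γ / (γ - 1) < 0 := div_neg_of_pos_of_neg hγ (by linarith)
    exact ⟨Real.rpow_pos_of_pos (by linarith) _,
      Real.rpow_lt_one_of_one_lt_of_neg hblt hexp⟩
  · -- γ > 1: base < 1, exponent > 0
    have hblt : ρhat * (αm * γ + γ - 1) / (K * αm * γ) < 1 := by
      rw [div_lt_one_of_neg hden]
      linarith [hD, mul_neg_of_neg_of_pos (by linarith : 1 - γ < 0) hposE]
    have hexp : 0 < γ / (γ - 1) := div_pos hγ (by linarith)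
    exact ⟨Real.rpow_pos_of_pos hb _, Real.rpow_lt_one hb.le hblt hexp⟩
end
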